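/- If G = H × C with gcd(|H|,|C|) = 1, C cyclic, and H a finite non-cyclic group all of whose irredundant covers have the same size, then every irredundant cover of G has the form {K × C : K ∈ 𝓗} for some irredundant cover 𝓗 of H; in particular G admits only one-sized covers. -/

import Mathlib

def IsCover {G : Type*} [Group G] (S : Set (Subgroup G)) : Prop :=
  (∀ H ∈ S, H ≠ (⊤ : Subgroup G)) ∧ ∀ g : G, ∃ H ∈ S, g ∈ H

def IsIrredundantCover {G : Type*} [Group G] (S : Set (Subgroup G)) : Prop :=
  IsCover S ∧ ∀ T : Set (Subgroup G), T ⊂ S → ¬ IsCover T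

def IsMaxCyclic {G : Type*} [Group G] (C : Subgroup G) : Prop :=
  IsCyclic C ∧ ∀ D : Subgroup G, IsCyclic D → C ≤ D → C = D

def OnlyOneSizedCovers (G : Type*) [Group G] : Prop :=
  ∀ S T : Set (Subgroup G), IsIrredundantCover S → IsIrredundantCover T →
    S.ncard = T.ncard

lemma exists_zpow_pow_eq {G : Type*} [Group G] [Finite G] {n : ℕ}
    (hn : Nat.Coprime (Nat.card G) n) (x : G) : ∃ b : ℤ, (x ^ n) ^ b = x := by
  obtain ⟨A, B, hAB⟩ : ∃ A B : ℤ, (Nat.card G : ℤ) * A + (n : ℤ) * B = 1 := by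
    refine ⟨Nat.gcdA (Nat.card G) n, Nat.gcdB (Nat.card G) n, ?_⟩
    have h := Nat.gcd_eq_gcd_ab (Nat.card G) n
    rw [hn] at h
    push_cast at h ⊢
    linarith
  refine ⟨B, ?_⟩
  have h1 : x ^ ((Nat.card G : ℤ) * A) = 1 := by
    rw [zpow_mul, zpow_natCast, pow_card_eq_one', one_zpow]
  calc (x ^ n) ^ B = x ^ ((n : ℤ) * B) := by rw [← zpow_natCast, ← zpow_mul]
    _ = x ^ ((Nat.card G : ℤ) * A) * x ^ ((n : ℤ) * B) := by rw [h1, one_mul]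
    _ = x ^ ((Nat.card G : ℤ) * A + (n : ℤ) * B) := (zpow_add x _ _).symm
    _ = x := by rw [hAB, zpow_one]

lemma mem_parts {H C : Type*} [Group H] [Group C] [Finite H] [Finite C]
    (hcop : Nat.Coprime (Nat.card H) (Nat.card C))
    {M : Subgroup (H × C)} {h : H} {c : C} (hm : (h, c) ∈ M) :
    (h, (1 : C)) ∈ M ∧ ((1 : H), c) ∈ M := by
  constructor
  · obtain ⟨b, hb⟩ := exists_zpow_pow_eq hcop h
    have h1 : (((h, c) : H × C) ^ Nat.card C) ^ b = (h, 1) := by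
      have h2 : ((h, c) : H × C) ^ Nat.card C = (h ^ Nat.card C, 1) := by
        rw [Prod.pow_mk, pow_card_eq_one']
      rw [h2, Prod.ext_iff]
      exact ⟨hb, one_zpow b⟩
    rw [← h1]
    exact M.zpow_mem (M.pow_mem hm _) b
  · obtain ⟨b, hb⟩ := exists_zpow_pow_eq hcop.symm c
    have h1 : (((h, c) : H × C) ^ Nat.card H) ^ b = (1, c) := by
      have h2 : ((h, c) : H × C) ^ Nat.card H = (1, c ^ Nat.card H) := by
        rw [Prod.pow_mk, pow_card_eq_one']
      rw [h2, Prod.ext_iff]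
      exact ⟨one_zpow b, hb⟩
    rw [← h1]
    exact M.zpow_mem (M.pow_mem hm _) b

lemma prodTop_injective {H C : Type*} [Group H] [Group C] :
    Function.Injective (fun K : Subgroup H => K.prod (⊤ : Subgroup C)) := by
  intro A B hAB
  simp only at hAB
  ext a
  have : ((a, 1) : H × C) ∈ A.prod ⊤ ↔ ((a, 1) : H × C) ∈ B.prod ⊤ := by rw [hAB]
  simpa [Subgroup.mem_prod] using this

theorem stmt17 (H C : Type*) [Group H] [Group C] [Finite H] [Finite C]
    (hH : ¬ IsCyclic H) (hone : OnlyOneSizedCovers H) (hC : IsCyclic C)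
    (hcop : Nat.Coprime (Nat.card H) (Nat.card C)) :
    (∀ S : Set (Subgroup (H × C)), IsIrredundantCover S →
      ∃ T : Set (Subgroup H), IsIrredundantCover T ∧
        S = (fun K : Subgroup H => K.prod (⊤ : Subgroup C)) '' T) ∧
    OnlyOneSizedCovers (H × C) := by
  obtain ⟨g, hg⟩ := hC.exists_generator
  have key : ∀ S : Set (Subgroup (H × C)), IsIrredundantCover S →
      ∃ T : Set (Subgroup H), IsIrredundantCover T ∧
        S = (fun K : Subgroup H => K.prod (⊤ : Subgroup C)) '' T := by
    intro S hS
    set T : Set (Subgroup H) := {A | A.prod (⊤ : Subgroup C) ∈ S} with hTdef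
    have hTproper : ∀ A ∈ T, A ≠ (⊤ : Subgroup H) := by
      intro A hA hAeq
      apply hS.1.1 _ hA
      rw [hAeq]
      ext ⟨x, y⟩
      simp [Subgroup.mem_prod]
    have hTcov : ∀ h : H, ∃ A ∈ T, h ∈ A := by
      intro h
      obtain ⟨M, hMS, hMmem⟩ := hS.1.2 (h, g)
      refine ⟨M.map (MonoidHom.fst H C), ?_, ⟨(h, g), hMmem, rfl⟩⟩
      have hM : (M.map (MonoidHom.fst H C)).prod (⊤ : Subgroup C) = M := by
        ext ⟨x, y⟩
        simp only [Subgroup.mem_prod, Subgroup.mem_map, Subgroup.mem_top, and_true]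
        constructor
        · rintro ⟨⟨x', y'⟩, hx', rfl⟩
          have hx1 : ((x', 1) : H × C) ∈ M := (mem_parts hcop hx').1
          have hg1 : ((1 : H), g) ∈ M := (mem_parts hcop hMmem).2
          obtain ⟨k, hk⟩ := hg y
          have hy : ((1 : H), y) ∈ M := by
            have := M.zpow_mem hg1 k
            rw [show ((1 : H), g) ^ k = ((1 : H), y) from Prod.ext (one_zpow k) hk] at this; exact this
          simpa using M.mul_mem hx1 hy
        · intro hxy
          exact ⟨(x, y), hxy, rfl⟩
      simpa [hTdef, hM] using hMS
    have himg_proper : ∀ A : Subgroup H, A ≠ ⊤ →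
        A.prod (⊤ : Subgroup C) ≠ (⊤ : Subgroup (H × C)) := by
      intro A hA hEq
      apply hA
      ext a
      have : ((a, 1) : H × C) ∈ A.prod ⊤ := hEq ▸ Subgroup.mem_top _
      simpa [Subgroup.mem_prod] using this
    have himg_cover : ∀ T' : Set (Subgroup H), (∀ A ∈ T', A ≠ ⊤) →
        (∀ h : H, ∃ A ∈ T', h ∈ A) →
        IsCover ((fun K : Subgroup H => K.prod (⊤ : Subgroup C)) '' T') := by
      intro T' hp hc
      constructor
      · rintro _ ⟨A, hA, rfl⟩
        exact himg_proper A (hp A hA)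
      · rintro ⟨x, y⟩
        obtain ⟨A, hA, hxA⟩ := hc x
        exact ⟨A.prod ⊤, ⟨A, hA, rfl⟩, by simp [Subgroup.mem_prod, hxA]⟩
    have hsub : (fun K : Subgroup H => K.prod (⊤ : Subgroup C)) '' T ⊆ S := by
      rintro _ ⟨A, hA, rfl⟩; exact hA
    have hEq : S = (fun K : Subgroup H => K.prod (⊤ : Subgroup C)) '' T := by
      by_contra hne
      exact hS.2 _ ⟨hsub, fun hsup => hne (le_antisymm hsup hsub)⟩
        (himg_cover T hTproper hTcov)
    refine ⟨T, ⟨⟨hTproper, hTcov⟩, ?_⟩, hEq⟩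
    intro T' hT' hcovT'
    apply hS.2 ((fun K : Subgroup H => K.prod (⊤ : Subgroup C)) '' T')
    · rw [hEq]
      refine ⟨Set.image_mono hT'.1, fun hsup => hT'.2 ?_⟩
      intro x hx
      obtain ⟨y, hy, hyx⟩ := hsup ⟨x, hx, rfl⟩
      exact prodTop_injective hyx ▸ hy
    · exact himg_cover T' hcovT'.1 (fun h => hcovT'.2 h)
  refine ⟨key, ?_⟩
  intro S1 S2 h1 h2
  obtain ⟨T1, hT1, rfl⟩ := key S1 h1
  obtain ⟨T2, hT2, rfl⟩ := key S2 h2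
  rw [Set.ncard_image_of_injective _ prodTop_injective,
    Set.ncard_image_of_injective _ prodTop_injective]
  exact hone T1 T2 hT1 hT2
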